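/- For n >= 3 and q_1,...,q_n in [0,1], the dual linear program 'minimize sum_i q_i r_i subject to r_i >= 0 and sum_{i in I} r_i >= |I| - 1 for all I in M' attains its minimum value min{ ((n-2)/(n-1)) sum_i q_i, sum_i q_i - max_i q_i }, and the minimum over the feasible region is attained either at the point ((n-2)/(n-1),...,(n-2)/(n-1)) or at a 0-1 vector with exactly one zero coordinate. -/

import Mathlib

lemma stmt4_key (n : ℕ) (hn : 3 ≤ n) (q r : Fin n → ℝ) (hq0 : ∀ i, 0 ≤ q i)
    (Q : ℝ) (hQ0 : 0 ≤ Q) (hQup : ∀ i, q i ≤ Q)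
    (hr0 : ∀ i, 0 ≤ r i)
    (hrI : ∀ I : Finset (Fin n), 2 ≤ I.card → I.card ≤ n - 1 →
      (I.card : ℝ) - 1 ≤ ∑ i ∈ I, r i) :
    ∑ i, q i * (1 - r i) ≤ max ((∑ i, q i) / ((n : ℝ) - 1)) Q := by
  have hn3 : (3 : ℝ) ≤ (n : ℝ) := by exact_mod_cast hn
  have hnn : (0 : ℝ) < (n : ℝ) - 1 := by linarith
  set S := ∑ i, q i with hS
  have hS0 : 0 ≤ S := Finset.sum_nonneg fun i _ => hq0 i
  set POS := Finset.univ.filter (fun i => r i < 1) with hPOS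
  by_cases hfull : POS = Finset.univ
  · -- all r i < 1
    have ht : ∀ i, 0 < 1 - r i := by
      intro i
      have hi : i ∈ POS := hfull ▸ Finset.mem_univ i
      rw [hPOS, Finset.mem_filter] at hi
      linarith [hi.2]
    have herase : ∀ j : Fin n, ∑ i ∈ Finset.univ.erase j, (1 - r i) ≤ 1 := by
      intro j
      have hcard : (Finset.univ.erase j).card = n - 1 := by
        rw [Finset.card_erase_of_mem (Finset.mem_univ j), Finset.card_univ, Fintype.card_fin]
      have hcon := hrI (Finset.univ.erase j) (by omega) (by omega)
      rw [hcard] at hcon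
      have hcast : ((n - 1 : ℕ) : ℝ) = (n : ℝ) - 1 := by
        have : (1 : ℕ) ≤ n := by omega
        push_cast [this]; ring
      rw [hcast] at hcon
      have hsum1 : ∑ i ∈ Finset.univ.erase j, (1 - r i)
          = ((n : ℝ) - 1) - ∑ i ∈ Finset.univ.erase j, r i := by
        rw [Finset.sum_sub_distrib, Finset.sum_const, hcard, nsmul_eq_mul, hcast, mul_one]
      linarith
    have shared : ∀ w : Fin n → ℝ, (∀ i, 0 ≤ w i) → (∀ i, q i + w i ≤ ∑ j, w j) →
        ∑ i, q i * (1 - r i) ≤ ∑ j, w j := by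
      intro w hw0 hwq
      have step1 : ∑ i, q i * (1 - r i) ≤ ∑ i, ((∑ j, w j) - w i) * (1 - r i) :=
        Finset.sum_le_sum fun i _ =>
          mul_le_mul_of_nonneg_right (by linarith [hwq i]) (le_of_lt (ht i))
      have step2 : ∑ i, ((∑ j, w j) - w i) * (1 - r i)
          = ∑ j, w j * (∑ i ∈ Finset.univ.erase j, (1 - r i)) := by
        have h1 : ∀ j : Fin n, ∑ i ∈ Finset.univ.erase j, (1 - r i)
            = (∑ i, (1 - r i)) - (1 - r j) := fun j =>
          Finset.sum_erase_eq_sub (Finset.mem_univ j)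
        have h2 : ∀ j : Fin n, w j * (∑ i ∈ Finset.univ.erase j, (1 - r i))
            = w j * (∑ i, (1 - r i)) - w j * (1 - r j) := fun j => by rw [h1 j]; ring
        have h3 : ∀ i : Fin n, ((∑ j, w j) - w i) * (1 - r i)
            = (∑ j, w j) * (1 - r i) - w i * (1 - r i) := fun i => by ring
        rw [Finset.sum_congr rfl fun j _ => h2 j, Finset.sum_congr rfl fun i _ => h3 i,
          Finset.sum_sub_distrib, Finset.sum_sub_distrib, ← Finset.mul_sum, ← Finset.sum_mul]
      have step3 : ∑ j, w j * (∑ i ∈ Finset.univ.erase j, (1 - r i)) ≤ ∑ j, w j * 1 :=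
        Finset.sum_le_sum fun j _ => mul_le_mul_of_nonneg_left (herase j) (hw0 j)
      simp only [mul_one] at step3
      linarith [step1, step2.le, step2.ge]
    by_cases hVQ : Q ≤ S / ((n : ℝ) - 1)
    · have hWsum : ∑ j, (S / ((n : ℝ) - 1) - q j) = S / ((n : ℝ) - 1) := by
        rw [Finset.sum_sub_distrib, Finset.sum_const, Finset.card_univ, Fintype.card_fin,
          nsmul_eq_mul, ← hS]
        field_simp
        ring
      have h := shared (fun i => S / ((n : ℝ) - 1) - q i)
        (fun i => by have := hQup i; linarith)
        (fun i => by rw [hWsum]; linarith)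
      rw [hWsum] at h
      exact h.trans (le_max_left _ _)
    · push_neg at hVQ
      have hQpos : 0 < Q := lt_of_le_of_lt (div_nonneg hS0 hnn.le) hVQ
      have hSlt : S < ((n : ℝ) - 1) * Q := by
        rw [div_lt_iff₀ hnn] at hVQ; linarith
      have hden : 0 < (n : ℝ) * Q - S := by nlinarith
      set θ := Q / ((n : ℝ) * Q - S) with hθ
      have hθ0 : 0 ≤ θ := div_nonneg hQ0 hden.le
      have hθ1 : θ ≤ 1 := by
        rw [hθ, div_le_one hden]; linarith
      have hWsum : ∑ j, θ * (Q - q j) = Q := by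
        rw [← Finset.mul_sum, Finset.sum_sub_distrib, Finset.sum_const, Finset.card_univ,
          Fintype.card_fin, nsmul_eq_mul, ← hS, hθ]
        field_simp
        exact div_self (ne_of_gt (by linarith))
      have h := shared (fun i => θ * (Q - q i))
        (fun i => mul_nonneg hθ0 (by linarith [hQup i]))
        (fun i => by
          rw [hWsum]
          nlinarith [hQup i, hθ1, hθ0])
      rw [hWsum] at h
      exact h.trans (le_max_right _ _)
  · -- POS ≠ univ
    have hcardle : POS.card ≤ n - 1 := by
      have h1 : POS.card ≤ n := by
        have := Finset.card_le_univ POS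
        rwa [Fintype.card_fin] at this
      have h2 : POS.card ≠ n := by
        intro h
        exact hfull (Finset.eq_univ_of_card POS (by rw [h, Fintype.card_fin]))
      omega
    have hdrop : ∑ i, q i * (1 - r i) ≤ ∑ i ∈ POS, q i * (1 - r i) := by
      rw [← Finset.sum_filter_add_sum_filter_not Finset.univ (fun i => r i < 1)
        (fun i => q i * (1 - r i))]
      have hneg : ∑ i ∈ Finset.univ.filter (fun i => ¬ r i < 1), q i * (1 - r i) ≤ 0 :=
        Finset.sum_nonpos fun i hi => by
          rw [Finset.mem_filter] at hi
          have : 1 ≤ r i := not_lt.mp hi.2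
          exact mul_nonpos_of_nonneg_of_nonpos (hq0 i) (by linarith)
      rw [hPOS]
      linarith
    have hsub : ∑ i ∈ POS, q i * (1 - r i) ≤ Q * ∑ i ∈ POS, (1 - r i) := by
      rw [Finset.mul_sum]
      refine Finset.sum_le_sum fun i hi => ?_
      rw [hPOS, Finset.mem_filter] at hi
      exact mul_le_mul_of_nonneg_right (hQup i) (by linarith [hi.2])
    have hPsum : ∑ i ∈ POS, (1 - r i) ≤ 1 := by
      by_cases h2 : 2 ≤ POS.card
      · have hcon := hrI POS h2 hcardle
        have : ∑ i ∈ POS, (1 - r i) = (POS.card : ℝ) - ∑ i ∈ POS, r i := by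
          rw [Finset.sum_sub_distrib, Finset.sum_const, nsmul_eq_mul, mul_one]
        linarith
      · have hc1 : POS.card ≤ 1 := by omega
        have : ∑ i ∈ POS, (1 - r i) ≤ ∑ i ∈ POS, (1 : ℝ) :=
          Finset.sum_le_sum fun i _ => by linarith [hr0 i]
        rw [Finset.sum_const, nsmul_eq_mul, mul_one] at this
        have hcast : (POS.card : ℝ) ≤ 1 := by exact_mod_cast hc1
        linarith
    calc ∑ i, q i * (1 - r i) ≤ Q * ∑ i ∈ POS, (1 - r i) := hdrop.trans hsub
      _ ≤ Q * 1 := mul_le_mul_of_nonneg_left hPsum hQ0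
      _ ≤ max (S / ((n : ℝ) - 1)) Q := by rw [mul_one]; exact le_max_right _ _


theorem stmt4 (n : ℕ) (hn : 3 ≤ n) (q : Fin n → ℝ) (hq : ∀ i, q i ∈ Set.Icc (0 : ℝ) 1) :
    IsLeast
      {s : ℝ | ∃ r : Fin n → ℝ, (∀ i, 0 ≤ r i) ∧
        (∀ I : Finset (Fin n), 2 ≤ I.card → I.card ≤ n - 1 →
          (I.card : ℝ) - 1 ≤ ∑ i ∈ I, r i) ∧
        s = ∑ i, q i * r i}
      (min (((n : ℝ) - 2) / ((n : ℝ) - 1) * ∑ i, q i)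
        ((∑ i, q i) - Finset.univ.sup' (Finset.univ_nonempty_iff.mpr ⟨⟨0, by omega⟩⟩) q))
    ∧
    ∃ r : Fin n → ℝ, (∀ i, 0 ≤ r i) ∧
      (∀ I : Finset (Fin n), 2 ≤ I.card → I.card ≤ n - 1 →
        (I.card : ℝ) - 1 ≤ ∑ i ∈ I, r i) ∧
      (∑ i, q i * r i
        = min (((n : ℝ) - 2) / ((n : ℝ) - 1) * ∑ i, q i)
            ((∑ i, q i) - Finset.univ.sup' (Finset.univ_nonempty_iff.mpr ⟨⟨0, by omega⟩⟩) q)) ∧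
      ((∀ i, r i = ((n : ℝ) - 2) / ((n : ℝ) - 1)) ∨
        ∃ k, r k = 0 ∧ ∀ i, i ≠ k → r i = 1) := by
  have hn3 : (3 : ℝ) ≤ (n : ℝ) := by exact_mod_cast hn
  have hnn : (0 : ℝ) < (n : ℝ) - 1 := by linarith
  have hne : (Finset.univ : Finset (Fin n)).Nonempty :=
    Finset.univ_nonempty_iff.mpr ⟨⟨0, by omega⟩⟩
  have hq0 : ∀ i, 0 ≤ q i := fun i => (hq i).1
  set S := ∑ i, q i with hS
  set Q := Finset.univ.sup' hne q with hQdef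
  have hQup : ∀ i, q i ≤ Q := fun i => Finset.le_sup' q (Finset.mem_univ i)
  obtain ⟨k, -, hk⟩ := Finset.exists_mem_eq_sup' hne q
  have hQ0 : 0 ≤ Q := le_trans (hq0 k) (hQup k)
  have hS0 : 0 ≤ S := Finset.sum_nonneg fun i _ => hq0 i
  -- the goal's sup' term is defeq to Q
  show IsLeast _ (min (((n : ℝ) - 2) / ((n : ℝ) - 1) * S) (S - Q)) ∧
    ∃ r : Fin n → ℝ, (∀ i, 0 ≤ r i) ∧
      (∀ I : Finset (Fin n), 2 ≤ I.card → I.card ≤ n - 1 →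
        (I.card : ℝ) - 1 ≤ ∑ i ∈ I, r i) ∧
      (∑ i, q i * r i = min (((n : ℝ) - 2) / ((n : ℝ) - 1) * S) (S - Q)) ∧
      ((∀ i, r i = ((n : ℝ) - 2) / ((n : ℝ) - 1)) ∨
        ∃ k, r k = 0 ∧ ∀ i, i ≠ k → r i = 1)
  -- attainment
  have att : ∃ r : Fin n → ℝ, (∀ i, 0 ≤ r i) ∧
      (∀ I : Finset (Fin n), 2 ≤ I.card → I.card ≤ n - 1 →
        (I.card : ℝ) - 1 ≤ ∑ i ∈ I, r i) ∧
      (∑ i, q i * r i = min (((n : ℝ) - 2) / ((n : ℝ) - 1) * S) (S - Q)) ∧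
      ((∀ i, r i = ((n : ℝ) - 2) / ((n : ℝ) - 1)) ∨
        ∃ k, r k = 0 ∧ ∀ i, i ≠ k → r i = 1) := by
    by_cases hmin : ((n : ℝ) - 2) / ((n : ℝ) - 1) * S ≤ S - Q
    · refine ⟨fun _ => ((n : ℝ) - 2) / ((n : ℝ) - 1), ?_, ?_, ?_, Or.inl fun i => rfl⟩
      · intro i
        apply div_nonneg <;> linarith
      · intro I h2 hle
        have hcard1 : (I.card : ℝ) ≤ (n : ℝ) - 1 := by
          have h1 : (1 : ℕ) ≤ n := by omega
          have : (I.card : ℝ) ≤ ((n - 1 : ℕ) : ℝ) := by exact_mod_cast hle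
          rwa [Nat.cast_sub h1, Nat.cast_one] at this
        rw [Finset.sum_const, nsmul_eq_mul]
        rw [mul_div_assoc', le_div_iff₀ hnn]
        have h2' : (2 : ℝ) ≤ (I.card : ℝ) := by exact_mod_cast h2
        nlinarith
      · rw [← Finset.sum_mul, ← hS, min_eq_left hmin]
        ring
    · push_neg at hmin
      refine ⟨fun i => if i = k then 0 else 1, ?_, ?_, ?_,
        Or.inr ⟨k, if_pos rfl, fun i hi => if_neg hi⟩⟩
      · intro i
        by_cases h : i = k <;> simp [h]
      · intro I h2 _
        have hge : ((I.erase k).card : ℝ) ≤ ∑ i ∈ I, (if i = k then (0:ℝ) else 1) := by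
          calc ((I.erase k).card : ℝ) = ∑ i ∈ I.erase k, (1 : ℝ) := by
                rw [Finset.sum_const, nsmul_eq_mul, mul_one]
            _ = ∑ i ∈ I.erase k, (if i = k then (0:ℝ) else 1) :=
                Finset.sum_congr rfl fun i hi => (if_neg (Finset.ne_of_mem_erase hi)).symm
            _ ≤ ∑ i ∈ I, (if i = k then (0:ℝ) else 1) :=
                Finset.sum_le_sum_of_subset_of_nonneg (Finset.erase_subset k I)
                  (fun i _ _ => by by_cases h : i = k <;> simp [h])
        have hcard : I.card ≤ (I.erase k).card + 1 := by
          have := Finset.pred_card_le_card_erase (s := I) (a := k)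
          omega
        have : (I.card : ℝ) ≤ ((I.erase k).card : ℝ) + 1 := by exact_mod_cast hcard
        linarith
      · have hval : ∑ i, q i * (if i = k then (0:ℝ) else 1) = S - q k := by
          have h1 : ∀ i : Fin n, q i * (if i = k then (0:ℝ) else 1)
              = q i - (if i = k then q i else 0) := by
            intro i; by_cases h : i = k <;> simp [h]
          rw [Finset.sum_congr rfl fun i _ => h1 i, Finset.sum_sub_distrib,
            Finset.sum_ite_eq' Finset.univ k q, if_pos (Finset.mem_univ k), ← hS]
        rw [hval, ← hk, min_eq_right (le_of_lt hmin)]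
  refine ⟨⟨?_, ?_⟩, att⟩
  · obtain ⟨r, h1, h2, h3, -⟩ := att
    exact ⟨r, h1, h2, h3.symm⟩
  · rintro s ⟨r, hr0, hrI, rfl⟩
    have key := stmt4_key n hn q r hq0 Q hQ0 hQup hr0 hrI
    have hT : ∑ i, q i * r i = S - ∑ i, q i * (1 - r i) := by
      have h1 : ∀ i : Fin n, q i * (1 - r i) = q i - q i * r i := fun i => by ring
      rw [Finset.sum_congr rfl fun i _ => h1 i, Finset.sum_sub_distrib, ← hS]
      ring
    have h2 : min (((n : ℝ) - 2) / ((n : ℝ) - 1) * S) (S - Q)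
        ≤ S - max (S / ((n : ℝ) - 1)) Q := by
      rcases max_cases (S / ((n : ℝ) - 1)) Q with ⟨he, -⟩ | ⟨he, -⟩ <;> rw [he]
      · have hc : ((n : ℝ) - 2) / ((n : ℝ) - 1) * S = S - S / ((n : ℝ) - 1) := by
          field_simp
          ring
        rw [← hc]
        exact min_le_left _ _
      · exact min_le_right _ _
    rw [hT]
    have : ∑ i, q i * (1 - r i) ≤ max (S / ((n : ℝ) - 1)) Q := key
    linarith
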